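/- arXiv:2101.12580 — 2 statements merged into one kernel-verified Lean document; each statement's English description precedes it below -/
import Mathlib

section
/- Let {γ_x}_{x ∈ M} be a family of pairwise non-meeting arcs at points x ∈ M ⊆ ℝ in the upper half-plane, each γ_x contained in {z : |z − x| ≤ 1}, and for x ∈ M ∩ K_n let p_n(x) be the first point of the line X_n = {z : Im z = 1/n} reached along γ_x starting from x. Then the map x ↦ Re(p_n(x)) is injective on M ∩ K_n. -/
open Set

/-- For a family of pairwise non-meeting arcs γ_x at x ∈ M ∩ K_n (each contained in the
closed unit disk about x), the real part of the first point p_n(x) where γ_x reaches the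
line Im z = 1/n is injective in x. -/
theorem stmt_9 (n : ℕ) (hn : 1 ≤ n)
    (M Kn : Set ℝ)
    (p : ℝ → ℝ → ℂ) (t : ℝ → ℝ)
    (harc : ∀ x ∈ M ∩ Kn,
      ContinuousOn (p x) (Icc 0 1) ∧ InjOn (p x) (Icc 0 1) ∧
      p x 0 = (x : ℂ) ∧ (∀ s ∈ Ioc (0:ℝ) 1, 0 < (p x s).im) ∧
      (p x '' Icc 0 1) ⊆ Metric.closedBall (x : ℂ) 1)
    -- t x is the parameter of the first point of the line Im z = 1/n reached along γ_x
    (ht : ∀ x ∈ M ∩ Kn, t x ∈ Ioc (0:ℝ) 1 ∧ (p x (t x)).im = 1 / (n : ℝ) ∧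
      ∀ s ∈ Ico (0:ℝ) (t x), (p x s).im ≠ 1 / (n : ℝ))
    -- the initial subarcs (which lie in Im z ≤ 1/n) pairwise do not meet
    (hdisj : ∀ x ∈ M ∩ Kn, ∀ y ∈ M ∩ Kn, x ≠ y →
      Disjoint (p x '' Icc 0 (t x)) (p y '' Icc 0 (t y))) :
    InjOn (fun x => (p x (t x)).re) (M ∩ Kn) := by
  intro x hx y hy hre
  by_contra hxy
  obtain ⟨htx, himx, -⟩ := ht x hx
  obtain ⟨hty, himy, -⟩ := ht y hy
  have heq : p x (t x) = p y (t y) := by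
    apply Complex.ext
    · exact hre
    · rw [himx, himy]
  have hmemx : p x (t x) ∈ p x '' Icc 0 (t x) :=
    ⟨t x, ⟨le_of_lt htx.1, le_refl _⟩, rfl⟩
  have hmemy : p x (t x) ∈ p y '' Icc 0 (t y) := by
    rw [heq]; exact ⟨t y, ⟨le_of_lt hty.1, le_refl _⟩, rfl⟩
  exact (hdisj x hx y hy hxy).ne_of_mem hmemx hmemy rfl
end

section
/- If φ: E → Y satisfies: for every open U ⊆ Y there exists T in the additive Borel class P^{ξ+1}(E) (i.e., Σ^0_{ξ+1} subsets of E) with φ⁻¹(U) ⊆ T ⊆ φ⁻¹(closure U), then the preimage under φ of every open subset of Y is Σ^0_{ξ+1} in E. -/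
open Set

/-- The additive Borel classes Σ⁰_ξ of a topological space: Σ⁰_1 consists of the open
sets, and Σ⁰_ξ consists of countable unions of complements of sets in lower classes. -/
inductive SigmaClass {X : Type*} [TopologicalSpace X] : Ordinal → Set X → Prop
  | open_ {s : Set X} : IsOpen s → SigmaClass 1 s
  | iUnion {ξ : Ordinal} (s : ℕ → Set X) (η : ℕ → Ordinal)
      (hη : ∀ n, 1 ≤ η n ∧ η n < ξ) (hs : ∀ n, SigmaClass (η n) (s n)) :
      SigmaClass ξ (⋃ n, (s n)ᶜ)

lemma sigma_empty {X : Type*} [TopologicalSpace X] {ξ : Ordinal} (hξ : 1 ≤ ξ) :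
    SigmaClass (ξ + 1) (∅ : Set X) := by
  have : (∅ : Set X) = ⋃ _ : ℕ, (univ : Set X)ᶜ := by simp
  rw [this]
  exact SigmaClass.iUnion _ (fun _ => 1)
    (fun n => ⟨le_refl _, lt_of_le_of_lt hξ (lt_add_one ξ)⟩)
    (fun n => SigmaClass.open_ isOpen_univ)

lemma sigma_decomp {X : Type*} [TopologicalSpace X] {ζ : Ordinal} {A : Set X}
    (hA : SigmaClass ζ A) (hne : ζ ≠ 1) :
    ∃ (s : ℕ → Set X) (η : ℕ → Ordinal),
      (∀ m, 1 ≤ η m ∧ η m < ζ) ∧ (∀ m, SigmaClass (η m) (s m)) ∧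
      A = ⋃ m, (s m)ᶜ := by
  induction hA with
  | open_ ho => exact absurd rfl hne
  | iUnion s η hη hs _ => exact ⟨s, η, hη, hs, rfl⟩

lemma sigma_iUnion {X : Type*} [TopologicalSpace X] {ξ : Ordinal} (hξ : 1 ≤ ξ)
    (T : ℕ → Set X) (hT : ∀ n, SigmaClass (ξ + 1) (T n)) :
    SigmaClass (ξ + 1) (⋃ n, T n) := by
  have hne : ξ + 1 ≠ 1 := by
    intro heq
    exact absurd (hξ.trans_lt (heq ▸ lt_add_one ξ)) (lt_irrefl 1)
  choose s η hη hs hTs using fun n => sigma_decomp (hT n) hne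
  let e : ℕ ≃ ℕ × ℕ := (Denumerable.eqv (ℕ × ℕ)).symm
  have : (⋃ n, T n) = ⋃ k, (s (e k).1 (e k).2)ᶜ := by
    ext x
    simp only [mem_iUnion]
    constructor
    · rintro ⟨n, hn⟩
      rw [hTs n] at hn
      obtain ⟨m, hm⟩ := mem_iUnion.1 hn
      exact ⟨e.symm (n, m), by simpa using hm⟩
    · rintro ⟨k, hk⟩
      refine ⟨(e k).1, ?_⟩
      rw [hTs]
      exact mem_iUnion.2 ⟨(e k).2, hk⟩
  rw [this]
  exact SigmaClass.iUnion _ _ (fun k => hη _ _) (fun k => hs _ _)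

/-- If for every open U ⊆ Y there is T ∈ Σ⁰_{ξ+1}(E) with φ⁻¹(U) ⊆ T ⊆ φ⁻¹(closure U),
then the preimage under φ of every open set is Σ⁰_{ξ+1} in E. -/
theorem stmt_11 {E Y : Type*} [MetricSpace E] [MetricSpace Y]
    [TopologicalSpace.SeparableSpace Y]
    (ξ : Ordinal) (hξ : 1 ≤ ξ) (φ : E → Y)
    (h : ∀ U : Set Y, IsOpen U →
      ∃ T : Set E, SigmaClass (ξ + 1) T ∧ φ ⁻¹' U ⊆ T ∧ T ⊆ φ ⁻¹' (closure U)) :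
    ∀ W : Set Y, IsOpen W → SigmaClass (ξ + 1) (φ ⁻¹' W) := by
  intro W hW
  -- countable basis of Y
  have : SecondCountableTopology Y := UniformSpace.secondCountable_of_separable Y
  obtain ⟨B, hBcount, hBne, hBbasis⟩ := TopologicalSpace.exists_countable_basis Y
  set S : Set (Set Y) := insert ∅ {b ∈ B | closure b ⊆ W} with hS
  have hScount : S.Countable := (hBcount.mono (sep_subset _ _)).insert ∅
  have hSne : S.Nonempty := ⟨∅, mem_insert _ _⟩
  obtain ⟨f, hf⟩ := hScount.exists_eq_range hSne
  have hfW : ∀ n, closure (f n) ⊆ W := by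
    intro n
    have : f n ∈ S := hf ▸ mem_range_self n
    rcases this with h1 | h2
    · simp [h1]
    · exact h2.2
  have hfopen : ∀ n, IsOpen (f n) := by
    intro n
    have : f n ∈ S := hf ▸ mem_range_self n
    rcases this with h1 | h2
    · simp [h1]
    · exact hBbasis.isOpen h2.1
  have hcover : W = ⋃ n, f n := by
    apply Subset.antisymm
    · intro y hy
      obtain ⟨ε, hε, hball⟩ := Metric.isOpen_iff.1 hW y hy
      obtain ⟨b, hbB, hyb, hbsub⟩ := hBbasis.exists_subset_of_mem_open
        (Metric.mem_ball_self (half_pos hε)) Metric.isOpen_ball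
      have hb : b ∈ S := by
        refine Or.inr ⟨hbB, ?_⟩
        calc closure b ⊆ closure (Metric.ball y (ε/2)) := closure_mono hbsub
          _ ⊆ Metric.closedBall y (ε/2) := Metric.closure_ball_subset_closedBall
          _ ⊆ Metric.ball y ε := Metric.closedBall_subset_ball (by linarith)
          _ ⊆ W := hball
      rw [hf] at hb
      obtain ⟨n, hn⟩ := hb
      exact mem_iUnion.2 ⟨n, hn ▸ hyb⟩
    · exact iUnion_subset fun n => (subset_closure.trans (hfW n))
  choose T hT hT1 hT2 using fun n => h (f n) (hfopen n)
  have : φ ⁻¹' W = ⋃ n, T n := by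
    apply Subset.antisymm
    · intro x hx
      have : φ x ∈ ⋃ n, f n := hcover ▸ hx
      obtain ⟨n, hn⟩ := mem_iUnion.1 this
      exact mem_iUnion.2 ⟨n, hT1 n hn⟩
    · exact iUnion_subset fun n => (hT2 n).trans (preimage_mono ((closure_mono subset_rfl).trans (hfW n)))
  rw [this]
  exact sigma_iUnion hξ T hT
end
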